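/- arXiv:1702.07150 — 2 statements merged into one kernel-verified Lean document; each statement's English description precedes it below -/
import Mathlib

section
/- Let Q̲ be a lower transition rate operator on a finite state space 𝒳. Then ‖Q̲‖ = 2·max{ |[Q̲ 1_x](x)| : x ∈ 𝒳 }. -/
open scoped BigOperators

variable {X : Type*} [Fintype X] [Nonempty X] [DecidableEq X]

/-- The maximum norm on real-valued functions on a finite state space. -/
noncomputable def maxNorm (f : X → ℝ) : ℝ := ⨆ x, |f x|

/-- The variation seminorm `max f - min f`. -/
noncomputable def varNorm (f : X → ℝ) : ℝ := (⨆ x, f x) - (⨅ x, f x)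

/-- The centred seminorm `(max f - min f)/2`. -/
noncomputable def centNorm (f : X → ℝ) : ℝ := ((⨆ x, f x) - (⨅ x, f x)) / 2

/-- Indicator function of the singleton `{x}`. -/
def indic (x : X) : X → ℝ := fun y => if y = x then 1 else 0

/-- A lower transition operator: dominates the minimum, is superadditive,
and is non-negatively homogeneous. -/
def IsLTO (T : (X → ℝ) → (X → ℝ)) : Prop :=
  (∀ f x, (⨅ y, f y) ≤ T f x) ∧
  (∀ f g x, T f x + T g x ≤ T (f + g) x) ∧
  (∀ (μ : ℝ), 0 ≤ μ → ∀ f, T (μ • f) = μ • T f)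

/-- A lower transition rate operator: vanishes on constants, is superadditive,
is non-negatively homogeneous, and is non-negative off the diagonal on indicators. -/
def IsLTRO (Q : (X → ℝ) → (X → ℝ)) : Prop :=
  (∀ γ : ℝ, Q (fun _ => γ) = 0) ∧
  (∀ f g x, Q f x + Q g x ≤ Q (f + g) x) ∧
  (∀ (μ : ℝ), 0 ≤ μ → ∀ f, Q (μ • f) = μ • Q f) ∧
  (∀ x y, x ≠ y → 0 ≤ Q (indic x) y)

/-- Operator norm induced by the maximum norm. -/
noncomputable def opNorm (A : (X → ℝ) → (X → ℝ)) : ℝ :=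
  sSup {r | ∃ f : X → ℝ, maxNorm f = 1 ∧ r = maxNorm (A f)}

/-- The (weak) coefficient of ergodicity. -/
noncomputable def coeffErg (A : (X → ℝ) → (X → ℝ)) : ℝ :=
  sSup {r | ∃ f : X → ℝ, (∀ x, 0 ≤ f x ∧ f x ≤ 1) ∧ r = varNorm (A f)}


lemma abs_le_maxNorm (f : X → ℝ) (x : X) : |f x| ≤ maxNorm f :=
  le_ciSup (f := fun x => |f x|) (Set.Finite.bddAbove (Set.finite_range _)) x

lemma maxNorm_le {f : X → ℝ} {c : ℝ} (h : ∀ x, |f x| ≤ c) : maxNorm f ≤ c :=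
  ciSup_le h

lemma Q_zero (Q : (X → ℝ) → (X → ℝ)) (hQ : IsLTRO Q) : Q (0 : X → ℝ) = 0 := hQ.1 0

lemma Q_add_const (Q : (X → ℝ) → (X → ℝ)) (hQ : IsLTRO Q) (f : X → ℝ) (c : ℝ) (x : X) :
    Q (f + fun _ => c) x = Q f x := by
  have h1 := hQ.2.1 f (fun _ => c) x
  have h2 := hQ.2.1 (f + fun _ => c) (fun _ => -c) x
  have e1 : ((f + fun _ => c) + fun _ => -c) = f := by funext z; simp
  rw [e1, hQ.1 (-c)] at h2
  rw [hQ.1 c] at h1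
  simp only [Pi.zero_apply, add_zero] at h1 h2
  linarith

lemma Q_sum_le (Q : (X → ℝ) → (X → ℝ)) (hQ : IsLTRO Q) {ι : Type*} [DecidableEq ι]
    (s : Finset ι) (g : ι → X → ℝ) (x : X) :
    ∑ i ∈ s, Q (g i) x ≤ Q (∑ i ∈ s, g i) x := by
  induction s using Finset.induction with
  | empty => simp [Q_zero Q hQ]
  | insert a s h ih =>
      rw [Finset.sum_insert h, Finset.sum_insert h]
      calc _ ≤ Q (g _) x + Q (∑ i ∈ _, g i) x := by linarith
        _ ≤ _ := hQ.2.1 _ _ x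

lemma qdiag_nonpos (Q : (X → ℝ) → (X → ℝ)) (hQ : IsLTRO Q) (x : X) : Q (indic x) x ≤ 0 := by
  have hsum : (∑ y : X, indic y) = (fun _ => (1:ℝ)) := by
    funext z; simp [indic, Finset.sum_apply, Finset.sum_ite_eq]
  have h1 := Q_sum_le Q hQ Finset.univ indic x
  rw [hsum, hQ.1 1] at h1
  simp only [Pi.zero_apply] at h1
  have h2 : Q (indic x) x + ∑ y ∈ Finset.univ.erase x, Q (indic y) x
      = ∑ y : X, Q (indic y) x :=
    Finset.add_sum_erase Finset.univ (fun y => Q (indic y) x) (Finset.mem_univ x)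
  have h3 : 0 ≤ ∑ y ∈ Finset.univ.erase x, Q (indic y) x :=
    Finset.sum_nonneg fun y hy => hQ.2.2.2 y x (Finset.ne_of_mem_erase hy)
  linarith

lemma lto_lower (Q : (X → ℝ) → (X → ℝ)) (hQ : IsLTRO Q) (f : X → ℝ) (y : X) :
    -(2 * (⨆ x, |Q (indic x) x|) * maxNorm f) ≤ Q f y := by
  set M := ⨆ x, |Q (indic x) x| with hM
  set c := maxNorm f with hc
  have hcf : ∀ x, |f x| ≤ c := abs_le_maxNorm f
  have hc0 : 0 ≤ c := le_trans (abs_nonneg _) (hcf (Classical.arbitrary X))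
  have hMy : |Q (indic y) y| ≤ M := le_ciSup (f := fun x => |Q (indic x) x|) (Set.Finite.bddAbove (Set.finite_range _)) y
  have hdecomp : (∑ x : X, (f x + c) • indic x) = f + (fun _ => c) := by
    funext z
    simp [indic, Finset.sum_apply, Pi.smul_apply, smul_eq_mul, mul_ite, Finset.sum_ite_eq]
  have h1 : ∑ x : X, Q ((f x + c) • indic x) y ≤ Q f y := by
    have h := Q_sum_le Q hQ Finset.univ (fun x => (f x + c) • indic x) y
    rwa [hdecomp, Q_add_const Q hQ f c y] at h
  have h2 : ∀ x, Q ((f x + c) • indic x) y = (f x + c) * Q (indic x) y := by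
    intro x
    rw [hQ.2.2.1 (f x + c) (by have := hcf x; have := neg_abs_le (f x); linarith) (indic x)]
    rfl
  have h1' : ∑ x : X, (f x + c) * Q (indic x) y ≤ Q f y := by
    calc ∑ x : X, (f x + c) * Q (indic x) y
        = ∑ x : X, Q ((f x + c) • indic x) y :=
          Finset.sum_congr rfl (fun x _ => (h2 x).symm)
      _ ≤ Q f y := h1
  have h3 : (f y + c) * Q (indic y) y ≤ ∑ x : X, (f x + c) * Q (indic x) y := by
    have he : (f y + c) * Q (indic y) y
        + ∑ x ∈ Finset.univ.erase y, (f x + c) * Q (indic x) y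
        = ∑ x : X, (f x + c) * Q (indic x) y :=
      Finset.add_sum_erase Finset.univ (fun x => (f x + c) * Q (indic x) y) (Finset.mem_univ y)
    have hn : 0 ≤ ∑ x ∈ Finset.univ.erase y, (f x + c) * Q (indic x) y :=
      Finset.sum_nonneg fun x hx => mul_nonneg
        (by have := hcf x; have := neg_abs_le (f x); linarith)
        (hQ.2.2.2 x y (Finset.ne_of_mem_erase hx))
    linarith
  have hq0 : Q (indic y) y ≤ 0 := qdiag_nonpos Q hQ y
  have hfy : f y ≤ c := le_trans (le_abs_self _) (hcf y)
  nlinarith [mul_le_mul_of_nonpos_right hfy hq0, abs_le.mp hMy]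

lemma lto_abs (Q : (X → ℝ) → (X → ℝ)) (hQ : IsLTRO Q) (f : X → ℝ) (y : X) :
    |Q f y| ≤ 2 * (⨆ x, |Q (indic x) x|) * maxNorm f := by
  have hmn : maxNorm (-f) = maxNorm f := by
    simp only [maxNorm, Pi.neg_apply, abs_neg]
  rw [abs_le]
  constructor
  · exact lto_lower Q hQ f y
  · have h := hQ.2.1 f (-f) y
    have e : f + -f = (0 : X → ℝ) := by funext z; simp
    rw [e, Q_zero Q hQ] at h
    simp only [Pi.zero_apply] at h
    have h2 := lto_lower Q hQ (-f) y
    rw [hmn] at h2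
    linarith

theorem stmt1 (Q : (X → ℝ) → (X → ℝ)) (hQ : IsLTRO Q) :
    opNorm Q = 2 * (⨆ x, |Q (indic x) x|) := by
  set M := ⨆ x, |Q (indic x) x| with hM
  set S : Set ℝ := {r | ∃ f : X → ℝ, maxNorm f = 1 ∧ r = maxNorm (Q f)} with hS
  obtain ⟨x₀, hx₀⟩ := Finite.exists_max (fun x => |Q (indic x) x|)
  have hMx : M = |Q (indic x₀) x₀| :=
    le_antisymm (ciSup_le hx₀)
      (le_ciSup (f := fun x => |Q (indic x) x|) (Set.Finite.bddAbove (Set.finite_range _)) x₀)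
  set f₀ : X → ℝ := fun z => 2 * indic x₀ z - 1 with hf₀
  have hnorm : maxNorm f₀ = 1 := by
    have h1 : ∀ z, |f₀ z| = 1 := by
      intro z; by_cases h : z = x₀ <;> simp [hf₀, indic, h] <;> norm_num
    simp only [maxNorm, h1, ciSup_const]
  have hQf₀ : ∀ z, Q f₀ z = 2 * Q (indic x₀) z := by
    intro z
    have e : f₀ = ((2:ℝ) • indic x₀) + (fun _ => (-1 : ℝ)) := by
      funext w; simp [hf₀, indic]; ring
    rw [e, Q_add_const Q hQ _ (-1) z, hQ.2.2.1 2 (by norm_num)]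
    rfl
  have hnormQf : maxNorm (Q f₀) = 2 * M := by
    apply le_antisymm
    · apply maxNorm_le
      intro z
      have := lto_abs Q hQ f₀ z
      rw [hnorm, ← hM] at this
      linarith
    · calc 2 * M = |Q f₀ x₀| := by rw [hQf₀ x₀, abs_mul, hMx]; norm_num
        _ ≤ maxNorm (Q f₀) := abs_le_maxNorm _ _
  have hmem : 2 * M ∈ S := ⟨f₀, hnorm, hnormQf.symm⟩
  have hub : ∀ r ∈ S, r ≤ 2 * M := by
    rintro r ⟨f, hf1, rfl⟩
    apply maxNorm_le
    intro z
    have := lto_abs Q hQ f z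
    rw [hf1, ← hM] at this
    linarith
  have : opNorm Q = sSup S := rfl
  rw [this]
  exact le_antisymm (csSup_le ⟨2 * M, hmem⟩ hub) (le_csSup ⟨2 * M, hub⟩ hmem)
end

section
/- Let T̲ be a lower transition operator on a finite state space and define its coefficient of ergodicity β(T̲) := max{‖T̲f‖_v : f ∈ ℒ(𝒳), 0 ≤ f ≤ 1}. Then 0 ≤ β(T̲) ≤ 1, and for every f ∈ ℒ(𝒳), ‖T̲f‖_v ≤ β(T̲)·‖f‖_v. -/
open scoped BigOperators

variable {X : Type*} [Fintype X] [Nonempty X] [DecidableEq X]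

omit [Nonempty X] [DecidableEq X] in
lemma myBddA (f : X → ℝ) : BddAbove (Set.range f) := (Set.finite_range f).bddAbove

omit [Nonempty X] [DecidableEq X] in
lemma myBddB (f : X → ℝ) : BddBelow (Set.range f) := (Set.finite_range f).bddBelow

lemma apply_le_sup (f : X → ℝ) (x : X) : f x ≤ ⨆ y, f y := le_ciSup (myBddA f) x

lemma inf_le_apply (f : X → ℝ) (x : X) : ⨅ y, f y ≤ f x := ciInf_le (myBddB f) x

lemma exists_sup (h : X → ℝ) : ∃ x, (⨆ y, h y) = h x := by
  obtain ⟨x, hx⟩ := Finite.exists_max h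
  exact ⟨x, le_antisymm (ciSup_le hx) (apply_le_sup h x)⟩

lemma exists_inf (h : X → ℝ) : ∃ x, (⨅ y, h y) = h x := by
  obtain ⟨x, hx⟩ := Finite.exists_min h
  exact ⟨x, le_antisymm (inf_le_apply h x) (le_ciInf hx)⟩

lemma sup_affine (a m : ℝ) (ha : 0 ≤ a) (h : X → ℝ) :
    (⨆ x, a * h x + m) = a * (⨆ x, h x) + m := by
  apply le_antisymm
  · exact ciSup_le fun x =>
      add_le_add_left (mul_le_mul_of_nonneg_left (apply_le_sup h x) ha) m
  · obtain ⟨x0, hx0⟩ := exists_sup h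
    rw [hx0]
    exact apply_le_sup (fun x => a * h x + m) x0

lemma inf_affine (a m : ℝ) (ha : 0 ≤ a) (h : X → ℝ) :
    (⨅ x, a * h x + m) = a * (⨅ x, h x) + m := by
  apply le_antisymm
  · obtain ⟨x0, hx0⟩ := exists_inf h
    rw [hx0]
    exact inf_le_apply (fun x => a * h x + m) x0
  · exact le_ciInf fun x =>
      add_le_add_left (mul_le_mul_of_nonneg_left (inf_le_apply h x) ha) m

theorem stmt11 (T : (X → ℝ) → (X → ℝ)) (hT : IsLTO T) :
    0 ≤ coeffErg T ∧ coeffErg T ≤ 1 ∧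
    ∀ f : X → ℝ, varNorm (T f) ≤ coeffErg T * varNorm f := by
  obtain ⟨h1, h2, h3⟩ := hT
  have hT0 : T 0 = 0 := by
    have := h3 0 le_rfl 0
    simpa using this
  -- upper domination: T f x ≤ sup f
  have hub : ∀ f : X → ℝ, ∀ x, T f x ≤ ⨆ y, f y := by
    intro f x
    have hadd := h2 f (-f) x
    have hsum : f + (-f) = 0 := by funext y; simp
    rw [hsum, hT0] at hadd
    have hlow := h1 (-f) x
    have hinf : -(⨆ y, f y) ≤ ⨅ y, (-f) y :=
      le_ciInf fun y => neg_le_neg (apply_le_sup f y)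
    have : (0 : X → ℝ) x = 0 := rfl
    rw [this] at hadd
    linarith
  have hconst : ∀ (c : ℝ) (x : X), T (fun _ => c) x = c := by
    intro c x
    have ha := h1 (fun _ => c) x
    rw [ciInf_const] at ha
    have hb := hub (fun _ => c) x
    rw [ciSup_const] at hb
    linarith
  have hshift : ∀ (f : X → ℝ) (c : ℝ) (x : X), T (f + fun _ => c) x = T f x + c := by
    intro f c x
    have ha := h2 f (fun _ => c) x
    have hb := h2 (f + fun _ => c) (fun _ => -c) x
    have heq : (f + fun _ => c) + (fun _ => (-c : ℝ)) = f := by funext y; simp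
    rw [heq] at hb
    rw [hconst] at ha
    rw [hconst] at hb
    linarith
  -- the set defining coeffErg
  set S : Set ℝ := {r | ∃ f : X → ℝ, (∀ x, 0 ≤ f x ∧ f x ≤ 1) ∧ r = varNorm (T f)}
    with hS
  have hzero : (0 : ℝ) ∈ S := by
    refine ⟨0, fun x => ⟨le_rfl, zero_le_one⟩, ?_⟩
    rw [hT0]
    simp [varNorm, ciSup_const, ciInf_const]
  have hne : S.Nonempty := ⟨0, hzero⟩
  have hbdd : ∀ r ∈ S, r ≤ 1 := by
    rintro r ⟨f, hf, rfl⟩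
    have hsup : (⨆ x, T f x) ≤ 1 := ciSup_le fun x =>
      (hub f x).trans (ciSup_le fun y => (hf y).2)
    have hinf : (0 : ℝ) ≤ ⨅ x, T f x := le_ciInf fun x =>
      le_trans (le_ciInf fun y => (hf y).1) (h1 f x)
    simp only [varNorm]
    linarith
  have hbddA : BddAbove S := ⟨1, hbdd⟩
  have hβ0 : 0 ≤ coeffErg T := le_csSup hbddA hzero
  have hβ1 : coeffErg T ≤ 1 := csSup_le hne hbdd
  refine ⟨hβ0, hβ1, ?_⟩
  intro f
  set m := ⨅ y, f y with hm
  set v := varNorm f with hv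
  have hv0 : 0 ≤ v := by
    obtain ⟨x0, hx0⟩ := exists_sup f
    have := inf_le_apply f x0
    simp only [hv, varNorm]
    linarith [hx0 ▸ this]
  rcases eq_or_lt_of_le hv0 with hveq | hvpos
  · -- f is constant
    have hfc : ∀ x, f x = m := by
      intro x
      have hle := apply_le_sup f x
      have hge := inf_le_apply f x
      have : (⨆ y, f y) = m := by
        rw [hv] at hveq
        simp only [varNorm] at hveq
        rw [hm]; linarith
      linarith [this ▸ hle]
    have hfm : f = fun _ => m := funext hfc
    have hTf : ∀ x, T f x = m := by intro x; rw [hfm, hconst]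
    have : varNorm (T f) = 0 := by
      simp only [varNorm]
      have hs : (⨆ x, T f x) = m := by
        apply le_antisymm (ciSup_le fun x => (hTf x).le)
        exact (hTf (Classical.arbitrary X)) ▸ apply_le_sup (T f) _
      have hi : (⨅ x, T f x) = m := by
        apply le_antisymm
        · exact (hTf (Classical.arbitrary X)) ▸ inf_le_apply (T f) _
        · exact le_ciInf fun x => (hTf x).ge
      rw [hs, hi]; ring
    rw [this, ← hveq, mul_zero]
  · -- nonconstant case
    set g : X → ℝ := fun x => (f x - m) / v with hg
    have hvne : v ≠ 0 := ne_of_gt hvpos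
    have hg01 : ∀ x, 0 ≤ g x ∧ g x ≤ 1 := by
      intro x
      constructor
      · apply div_nonneg _ hv0
        linarith [inf_le_apply f x]
      · rw [div_le_one hvpos]
        simp only [hv, varNorm, hm]
        linarith [apply_le_sup f x]
    have hfg : f = (v • g) + fun _ => m := by
      funext x
      simp only [Pi.add_apply, Pi.smul_apply, hg, smul_eq_mul]
      field_simp
      ring
    have hTfx : ∀ x, T f x = v * T g x + m := by
      intro x
      rw [hfg, hshift, h3 v hv0]
      rfl
    have hvar : varNorm (T f) = v * varNorm (T g) := by
      simp only [varNorm]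
      have hs : (⨆ x, T f x) = v * (⨆ x, T g x) + m := by
        rw [show (fun x => T f x) = fun x => v * T g x + m from funext hTfx]
        exact sup_affine v m hv0 (T g)
      have hi : (⨅ x, T f x) = v * (⨅ x, T g x) + m := by
        rw [show (fun x => T f x) = fun x => v * T g x + m from funext hTfx]
        exact inf_affine v m hv0 (T g)
      rw [hs, hi]; ring
    have hmem : varNorm (T g) ∈ S := ⟨g, hg01, rfl⟩
    have hle : varNorm (T g) ≤ coeffErg T := le_csSup hbddA hmem
    rw [hvar]
    calc v * varNorm (T g) ≤ v * coeffErg T :=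
          mul_le_mul_of_nonneg_left hle hv0
      _ = coeffErg T * v := mul_comm _ _
end
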